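/- arXiv:1808.00873 — 3 statements merged into one kernel-verified Lean document; each statement's English description precedes it below -/
import Mathlib

section
/- Let β₀, β₁ ∈ (0,1) and define the adapted metric on Σ_A by d(s,t) = β₁^{♯_i(s)}·β₀^{i-♯_i(s)} where i = max{k | s_k = t_k agree up to k} (with d(s,t) = 0 if s = t). Then the coding map π: Σ_A → ℝ, π(s) = ∑_{i=1}^∞ s_i β₁^{♯_i(s)} β₀^{i-♯_i(s)}, is Lipschitz continuous with respect to this adapted metric. -/
open Classical in
private lemma term_le (β₀ β₁ : ℝ) (hβ₀ : β₀ ∈ Set.Ioo (0:ℝ) 1) (hβ₁ : β₁ ∈ Set.Ioo (0:ℝ) 1)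
    (u : ℕ → ℕ) (hu : ∀ k, u k ≤ 1) (n i : ℕ) (hni : n ≤ i) :
    (u i : ℝ) * β₁ ^ (∑ k ∈ Finset.range (i + 1), u k)
        * β₀ ^ (i + 1 - ∑ k ∈ Finset.range (i + 1), u k)
      ≤ β₁ ^ (∑ k ∈ Finset.range n, u k) * β₀ ^ (n - ∑ k ∈ Finset.range n, u k)
        * (max β₀ β₁) ^ (i + 1 - n) := by
  obtain ⟨h0, h0'⟩ := hβ₀
  obtain ⟨h1, h1'⟩ := hβ₁
  set A := ∑ k ∈ Finset.range n, u k with hA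
  set d := ∑ k ∈ Finset.Ico n (i+1), u k with hd
  have hAn : A ≤ n := by
    calc A ≤ ∑ k ∈ Finset.range n, 1 := Finset.sum_le_sum (fun k _ => hu k)
    _ = n := by simp
  have hdle : d ≤ i + 1 - n := by
    calc d ≤ ∑ k ∈ Finset.Ico n (i+1), 1 := Finset.sum_le_sum (fun k _ => hu k)
    _ = i + 1 - n := by simp
  have hsplit : ∑ k ∈ Finset.range (i+1), u k = A + d := by
    rw [hA, hd]
    exact (Finset.sum_range_add_sum_Ico _ (by omega)).symm
  have hexp : i + 1 - (A + d) = (n - A) + ((i + 1 - n) - d) := by omega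
  have hM0 : β₀ ≤ max β₀ β₁ := le_max_left _ _
  have hM1 : β₁ ≤ max β₀ β₁ := le_max_right _ _
  have hMpos : (0:ℝ) < max β₀ β₁ := lt_max_of_lt_left h0
  rw [hsplit, hexp]
  have hu1 : (u i : ℝ) ≤ 1 := by exact_mod_cast hu i
  have step : β₁ ^ d * β₀ ^ ((i + 1 - n) - d) ≤ (max β₀ β₁) ^ (i + 1 - n) := by
    calc β₁ ^ d * β₀ ^ ((i + 1 - n) - d)
        ≤ (max β₀ β₁) ^ d * (max β₀ β₁) ^ ((i + 1 - n) - d) :=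
          mul_le_mul (pow_le_pow_left₀ h1.le hM1 d) (pow_le_pow_left₀ h0.le hM0 _)
            (pow_nonneg h0.le _) (pow_nonneg hMpos.le _)
      _ = (max β₀ β₁) ^ (i + 1 - n) := by rw [← pow_add]; congr 1; omega
  calc (u i : ℝ) * β₁ ^ (A + d) * β₀ ^ ((n - A) + ((i + 1 - n) - d))
      ≤ 1 * β₁ ^ (A + d) * β₀ ^ ((n - A) + ((i + 1 - n) - d)) := by
        apply mul_le_mul_of_nonneg_right (mul_le_mul_of_nonneg_right hu1 (pow_nonneg h1.le _))
          (pow_nonneg h0.le _)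
    _ = (β₁ ^ A * β₀ ^ (n - A)) * (β₁ ^ d * β₀ ^ ((i + 1 - n) - d)) := by rw [pow_add, pow_add]; ring
    _ ≤ (β₁ ^ A * β₀ ^ (n - A)) * (max β₀ β₁) ^ (i + 1 - n) :=
        mul_le_mul_of_nonneg_left step (mul_nonneg (pow_nonneg h1.le _) (pow_nonneg h0.le _))

open Classical in
/-- The coding map π is Lipschitz with respect to the adapted metric
d(s,t) = β₁^{♯_i(s)} β₀^{i-♯_i(s)}, where i is the length of the longest
common prefix of s and t. -/
theorem stmt_11 (β₀ β₁ : ℝ) (hβ₀ : β₀ ∈ Set.Ioo (0:ℝ) 1) (hβ₁ : β₁ ∈ Set.Ioo (0:ℝ) 1) :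
    ∃ C > 0, ∀ s t : ℕ → ℕ,
      (∀ i, s i ≤ 1) → (∀ i, ¬(s i = 1 ∧ s (i + 1) = 1)) →
      (∀ i, t i ≤ 1) → (∀ i, ¬(t i = 1 ∧ t (i + 1) = 1)) →
      ∀ h : ∃ k, s k ≠ t k,
        |(∑' i : ℕ, (s i : ℝ) * β₁ ^ (∑ k ∈ Finset.range (i + 1), s k)
              * β₀ ^ (i + 1 - ∑ k ∈ Finset.range (i + 1), s k)) -
         (∑' i : ℕ, (t i : ℝ) * β₁ ^ (∑ k ∈ Finset.range (i + 1), t k)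
              * β₀ ^ (i + 1 - ∑ k ∈ Finset.range (i + 1), t k))|
        ≤ C * β₁ ^ (∑ k ∈ Finset.range (Nat.find h), s k)
            * β₀ ^ (Nat.find h - ∑ k ∈ Finset.range (Nat.find h), s k) := by
  obtain ⟨h0, h0'⟩ := hβ₀
  obtain ⟨h1, h1'⟩ := hβ₁
  set M := max β₀ β₁ with hM
  have hMpos : (0:ℝ) < M := lt_max_of_lt_left h0
  have hMlt : M < 1 := max_lt h0' h1'
  refine ⟨2 * M / (1 - M), div_pos (by linarith) (by linarith), ?_⟩
  intro s t hs _ ht _ h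
  set n := Nat.find h with hn
  have hagree : ∀ k < n, s k = t k := fun k hk => by
    by_contra hc; exact hk.not_ge (Nat.find_le hc)
  -- functions
  set f : ℕ → ℝ := fun i => (s i : ℝ) * β₁ ^ (∑ k ∈ Finset.range (i + 1), s k)
      * β₀ ^ (i + 1 - ∑ k ∈ Finset.range (i + 1), s k) with hf
  set g : ℕ → ℝ := fun i => (t i : ℝ) * β₁ ^ (∑ k ∈ Finset.range (i + 1), t k)
      * β₀ ^ (i + 1 - ∑ k ∈ Finset.range (i + 1), t k) with hg
  have hfnonneg : ∀ u : ℕ → ℕ, ∀ i : ℕ, 0 ≤ (u i : ℝ) * β₁ ^ (∑ k ∈ Finset.range (i + 1), u k)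
      * β₀ ^ (i + 1 - ∑ k ∈ Finset.range (i + 1), u k) := fun u i =>
    mul_nonneg (mul_nonneg (Nat.cast_nonneg _) (pow_nonneg h1.le _)) (pow_nonneg h0.le _)
  have hble : ∀ (u : ℕ → ℕ), (∀ k, u k ≤ 1) → ∀ i,
      (u i : ℝ) * β₁ ^ (∑ k ∈ Finset.range (i + 1), u k)
        * β₀ ^ (i + 1 - ∑ k ∈ Finset.range (i + 1), u k) ≤ M ^ (i + 1) := by
    intro u hu i
    have := term_le β₀ β₁ ⟨h0, h0'⟩ ⟨h1, h1'⟩ u hu 0 i (Nat.zero_le i)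
    simpa using this
  have hsummable : ∀ (u : ℕ → ℕ), (∀ k, u k ≤ 1) →
      Summable (fun i => (u i : ℝ) * β₁ ^ (∑ k ∈ Finset.range (i + 1), u k)
        * β₀ ^ (i + 1 - ∑ k ∈ Finset.range (i + 1), u k)) := by
    intro u hu
    apply Summable.of_nonneg_of_le (hfnonneg u) (hble u hu)
    simpa [pow_succ'] using (summable_geometric_of_lt_one hMpos.le hMlt).mul_left M
  have hfs : Summable f := hsummable s hs
  have hgs : Summable g := hsummable t ht
  -- prefix sums agree
  have hprefix : ∀ i < n, f i = g i := by
    intro i hi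
    have hsum : ∑ k ∈ Finset.range (i+1), s k = ∑ k ∈ Finset.range (i+1), t k :=
      Finset.sum_congr rfl (fun k hk => hagree k (by
        simp only [Finset.mem_range] at hk; omega))
    simp [hf, hg, hsum, hagree i hi]
  set A := ∑ k ∈ Finset.range n, s k with hAdef
  set B := β₁ ^ A * β₀ ^ (n - A) with hB
  have hBpos : 0 < B := mul_pos (pow_pos h1 _) (pow_pos h0 _)
  have hAt : ∑ k ∈ Finset.range n, t k = A :=
    (Finset.sum_congr rfl (fun k hk => (hagree k (Finset.mem_range.mp hk)).symm))
  -- split tsums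
  have hsplitf := Summable.sum_add_tsum_nat_add (f := f) n hfs
  have hsplitg := Summable.sum_add_tsum_nat_add (f := g) n hgs
  have hpre : ∑ i ∈ Finset.range n, f i = ∑ i ∈ Finset.range n, g i :=
    Finset.sum_congr rfl (fun i hi => hprefix i (Finset.mem_range.mp hi))
  have hdiff : (∑' i, f i) - (∑' i, g i) = (∑' j, f (j + n)) - (∑' j, g (j + n)) := by
    rw [← hsplitf, ← hsplitg, hpre]; ring
  -- tail term bounds
  have hfb : ∀ j : ℕ, f (j + n) ≤ B * M ^ (j + 1) := by
    intro j
    have := term_le β₀ β₁ ⟨h0, h0'⟩ ⟨h1, h1'⟩ s hs n (j + n) (Nat.le_add_left n j)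
    simpa [hf, hB, hAdef, hM, show j + n + 1 - n = j + 1 by omega] using this
  have hgb : ∀ j : ℕ, g (j + n) ≤ B * M ^ (j + 1) := by
    intro j
    have := term_le β₀ β₁ ⟨h0, h0'⟩ ⟨h1, h1'⟩ t ht n (j + n) (Nat.le_add_left n j)
    simpa [hg, hB, hAt, hM, show j + n + 1 - n = j + 1 by omega] using this
  have habs : ∀ j : ℕ, |f (j + n) - g (j + n)| ≤ 2 * B * M ^ (j + 1) := by
    intro j
    have hgnn : 0 ≤ g (j + n) := hfnonneg t (j + n)
    have hfnn : 0 ≤ f (j + n) := hfnonneg s (j + n)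
    have hp : 0 ≤ B * M ^ (j + 1) := mul_nonneg hBpos.le (pow_pos hMpos _).le
    have h2 := hfb j
    have h3 := hgb j
    rw [abs_sub_le_iff]
    constructor <;> linarith
  have hsum2 : Summable (fun j : ℕ => 2 * B * M ^ (j + 1)) := by
    simpa [pow_succ', mul_assoc] using
      (((summable_geometric_of_lt_one hMpos.le hMlt).mul_left M).mul_left (2 * B))
  have hfs' : Summable (fun j => f (j + n)) := (summable_nat_add_iff n).mpr hfs
  have hgs' : Summable (fun j => g (j + n)) := (summable_nat_add_iff n).mpr hgs
  have habsum : Summable (fun j => |f (j + n) - g (j + n)|) := (hfs'.sub hgs').abs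
  have hval : ∑' j : ℕ, 2 * B * M ^ (j + 1) = 2 * B * M * (1 - M)⁻¹ := by
    have he : (fun j : ℕ => 2 * B * M ^ (j + 1)) = fun j : ℕ => (2 * B * M) * M ^ j := by
      ext j; rw [pow_succ']; ring
    rw [he, tsum_mul_left, tsum_geometric_of_lt_one hMpos.le hMlt]
  have key : |∑' j : ℕ, (f (j + n) - g (j + n))| ≤ ∑' j : ℕ, |f (j + n) - g (j + n)| := by
    simpa [Real.norm_eq_abs] using
      norm_tsum_le_tsum_norm (f := fun j => f (j + n) - g (j + n))
        (by simpa [Real.norm_eq_abs] using habsum)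
  calc |(∑' i, f i) - (∑' i, g i)| = |∑' j : ℕ, (f (j + n) - g (j + n))| := by
        rw [hdiff, Summable.tsum_sub hfs' hgs']
    _ ≤ ∑' j : ℕ, |f (j + n) - g (j + n)| := key
    _ ≤ ∑' j : ℕ, 2 * B * M ^ (j + 1) := Summable.tsum_le_tsum habs habsum hsum2
    _ = 2 * B * M * (1 - M)⁻¹ := hval
    _ = 2 * M / (1 - M) * β₁ ^ A * β₀ ^ (n - A) := by rw [hB]; ring
end

section
/- The Parry entropy -( (p/(2-p))·log p + ((1-p)/(2-p))·log(1-p) ) of the Markov chain with transition matrix ((p,1-p),(1,0)) is maximized over p ∈ (0,1) at p = 1/φ = (√5 - 1)/2, and its maximal value is log φ where φ = (1+√5)/2 is the golden mean. -/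
/-- The Parry entropy h(p) = -((p/(2-p)) log p + ((1-p)/(2-p)) log(1-p)) is
maximized over p ∈ (0,1) at p = (√5-1)/2, with maximal value log((1+√5)/2). -/
theorem stmt_13 :
    let h : ℝ → ℝ := fun p =>
      -((p / (2 - p)) * Real.log p + ((1 - p) / (2 - p)) * Real.log (1 - p))
    (∀ p ∈ Set.Ioo (0:ℝ) 1, h p ≤ h ((Real.sqrt 5 - 1) / 2)) ∧
    h ((Real.sqrt 5 - 1) / 2) = Real.log ((1 + Real.sqrt 5) / 2) := by
  intro h
  have hs5 : Real.sqrt 5 ^ 2 = 5 := Real.sq_sqrt (by norm_num)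
  have hs2 : 2 < Real.sqrt 5 := by nlinarith [Real.sqrt_nonneg 5]
  have hs3 : Real.sqrt 5 < 3 := by nlinarith [Real.sqrt_nonneg 5]
  set s := Real.sqrt 5 with hsdef
  set φ : ℝ := (1 + s) / 2 with hφdef
  have hφpos : 0 < φ := by rw [hφdef]; linarith
  have hφne : φ ≠ 0 := ne_of_gt hφpos
  have hlp0 : Real.log ((s - 1) / 2) = -Real.log φ := by
    have : (s - 1) / 2 = φ⁻¹ := by
      rw [hφdef]; field_simp; nlinarith
    rw [this, Real.log_inv]
  have hlq0 : Real.log (1 - (s - 1) / 2) = -(2 * Real.log φ) := by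
    have e : 1 - (s - 1) / 2 = (φ ^ 2)⁻¹ := by
      rw [hφdef]; field_simp; nlinarith
    rw [e, Real.log_inv, Real.log_pow]
    push_cast; ring
  have hval : h ((s - 1) / 2) = Real.log φ := by
    show -(((s - 1) / 2 / (2 - (s - 1) / 2)) * Real.log ((s - 1) / 2)
        + ((1 - (s - 1) / 2) / (2 - (s - 1) / 2)) * Real.log (1 - (s - 1) / 2))
        = Real.log φ
    rw [hlp0, hlq0]
    have hd : (2 : ℝ) - (s - 1) / 2 ≠ 0 := by
      have : (0:ℝ) < 2 - (s - 1) / 2 := by linarith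
      exact ne_of_gt this
    generalize Real.log φ = L'
    have hd5 : (5:ℝ) - s ≠ 0 := by intro h'; nlinarith
    field_simp
    linear_combination L' * mul_inv_cancel₀ hd5
  refine ⟨?_, hval⟩
  intro p hp
  rw [hval]
  obtain ⟨hp0', hp1⟩ := hp
  have hq : 0 < 1 - p := by linarith
  have h2p : 0 < 2 - p := by linarith
  set L := Real.log φ with hL
  have k1 : Real.log (1 / (p * φ)) ≤ 1 / (p * φ) - 1 :=
    Real.log_le_sub_one_of_pos (by positivity)
  have k2 : Real.log (1 / ((1 - p) * φ ^ 2)) ≤ 1 / ((1 - p) * φ ^ 2) - 1 :=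
    Real.log_le_sub_one_of_pos (by positivity)
  have e1 : Real.log (1 / (p * φ)) = -(Real.log p + L) := by
    rw [one_div, Real.log_inv, Real.log_mul (ne_of_gt hp0') hφne]
  have e2 : Real.log (1 / ((1 - p) * φ ^ 2)) = -(Real.log (1 - p) + 2 * L) := by
    rw [one_div, Real.log_inv, Real.log_mul (ne_of_gt hq) (by positivity),
      Real.log_pow]
    push_cast; ring
  rw [e1] at k1; rw [e2] at k2
  have m1 : p * (-(Real.log p + L)) ≤ 1 / φ - p := by
    have h1 := mul_le_mul_of_nonneg_left k1 hp0'.le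
    have hps : p * (1 / (p * φ) - 1) = 1 / φ - p := by
      field_simp
    linarith [h1.trans_eq hps]
  have m2 : (1 - p) * (-(Real.log (1 - p) + 2 * L)) ≤ 1 / φ ^ 2 - (1 - p) := by
    have h2 := mul_le_mul_of_nonneg_left k2 hq.le
    have hqs : (1 - p) * (1 / ((1 - p) * φ ^ 2) - 1) = 1 / φ ^ 2 - (1 - p) := by
      field_simp
    linarith [h2.trans_eq hqs]
  have hsum : 1 / φ + 1 / φ ^ 2 = 1 := by
    rw [hφdef]; field_simp; nlinarith
  have key : -(p * Real.log p + (1 - p) * Real.log (1 - p)) ≤ (2 - p) * L := by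
    nlinarith [add_le_add m1 m2, hsum]
  show -((p / (2 - p)) * Real.log p + ((1 - p) / (2 - p)) * Real.log (1 - p)) ≤ L
  rw [div_mul_eq_mul_div, div_mul_eq_mul_div, ← add_div, ← neg_div,
      div_le_iff₀ h2p]
  linarith [key]
end

section
/- Let f be a real analytic function on an interval I satisfying the δ-transversality condition: for all x ∈ I, f(x) < δ implies f'(x) < -δ. Then for every r ∈ (0, δ), the Lebesgue measure of the set {x ∈ I : |f(x)| ≤ r} is at most 2r/δ. -/
/-- δ-transversality: if f is real analytic on [a,b] and f(x) < δ implies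
f'(x) < -δ there, then for r ∈ (0,δ) the Lebesgue measure of
{x ∈ [a,b] : |f x| ≤ r} is at most 2r/δ. -/
theorem stmt_17 (a b δ r : ℝ) (f : ℝ → ℝ) (hab : a ≤ b) (hδ : 0 < δ)
    (han : ∀ x ∈ Set.Icc a b, AnalyticAt ℝ f x)
    (htrans : ∀ x ∈ Set.Icc a b, f x < δ → deriv f x < -δ)
    (hr : r ∈ Set.Ioo 0 δ) :
    MeasureTheory.volume {x ∈ Set.Icc a b | |f x| ≤ r} ≤ ENNReal.ofReal (2 * r / δ) := by
  obtain ⟨hr0, hrδ⟩ := hr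
  set S := {x ∈ Set.Icc a b | |f x| ≤ r} with hSdef
  have hdiff : ∀ t ∈ Set.Icc a b, DifferentiableAt ℝ f t := fun t ht =>
    (han t ht).differentiableAt
  have hcont : ContinuousOn f (Set.Icc a b) := fun t ht =>
    ((han t ht).continuousAt).continuousWithinAt
  -- key: f stays below δ between two points of S
  have hlt : ∀ x ∈ S, ∀ t ∈ Set.Icc a b, x ≤ t → (∀ s ∈ Set.Icc x t, s ∈ Set.Icc a b) →
      f t < δ := by
    intro x hx t ht hxt hsub
    by_contra hcon
    push_neg at hcon
    set T := {s ∈ Set.Icc x t | δ ≤ f s} with hTdef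
    have hTclosed : IsClosed T := by
      have : T = Set.Icc x t ∩ f ⁻¹' Set.Ici δ := by ext s; simp [hTdef, Set.mem_setOf_eq]
      rw [this]
      exact ContinuousOn.preimage_isClosed_of_isClosed
        (hcont.mono hsub) isClosed_Icc isClosed_Ici
    have hTne : T.Nonempty := ⟨t, ⟨hxt, le_rfl⟩, hcon⟩
    have hTbdd : BddBelow T := ⟨x, fun s hs => hs.1.1⟩
    set c := sInf T with hc
    have hcT : c ∈ T := hTclosed.csInf_mem hTne hTbdd
    have hfx : f x < δ := lt_of_le_of_lt (le_trans (le_abs_self _) hx.2) hrδ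
    have hxc : x < c := by
      rcases lt_or_eq_of_le hcT.1.1 with h | h
      · exact h
      · exact absurd hcT.2 (by rw [← h]; linarith)
    have hanti : StrictAntiOn f (Set.Icc x c) := by
      apply strictAntiOn_of_deriv_neg (convex_Icc x c)
      · exact (hcont.mono (fun s hs => hsub s ⟨hs.1, le_trans hs.2 hcT.1.2⟩))
      · intro s hs
        rw [interior_Icc] at hs
        have hsab : s ∈ Set.Icc a b := hsub s ⟨le_of_lt hs.1, le_trans (le_of_lt hs.2) hcT.1.2⟩
        have hfs : f s < δ := by
          by_contra hfs
          push_neg at hfs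
          have : c ≤ s := csInf_le hTbdd ⟨⟨le_of_lt hs.1, le_trans (le_of_lt hs.2) hcT.1.2⟩, hfs⟩
          linarith [hs.2]
        linarith [htrans s hsab hfs]
    have : f c < f x := hanti ⟨le_rfl, le_of_lt hxc⟩ ⟨le_of_lt hxc, le_rfl⟩ hxc
    linarith [hcT.2]
  -- quantitative bound between two points of S
  have key : ∀ x ∈ S, ∀ y ∈ S, x ≤ y → δ * (y - x) ≤ 2 * r := by
    intro x hx y hy hxy
    rcases eq_or_lt_of_le hxy with h | h
    · rw [← h]; simp; positivity
    have hsub : ∀ s ∈ Set.Icc x y, s ∈ Set.Icc a b := fun s hs =>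
      ⟨le_trans hx.1.1 hs.1, le_trans hs.2 hy.1.2⟩
    have hflt : ∀ s ∈ Set.Icc x y, f s < δ := fun s hs =>
      hlt x hx s (hsub s hs) hs.1 (fun u hu => hsub u ⟨hu.1, le_trans hu.2 hs.2⟩)
    set g := fun t => f t + δ * t with hg
    have hganti : StrictAntiOn g (Set.Icc x y) := by
      apply strictAntiOn_of_deriv_neg (convex_Icc x y)
      · exact ((hcont.mono hsub).add (continuous_const.mul continuous_id).continuousOn)
      · intro s hs
        rw [interior_Icc] at hs
        have hsab : s ∈ Set.Icc a b := hsub s ⟨le_of_lt hs.1, le_of_lt hs.2⟩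
        have hd : HasDerivAt g (deriv f s + δ * 1) s :=
          ((hdiff s hsab).hasDerivAt).add ((hasDerivAt_id s).const_mul δ)
        rw [hd.deriv]
        have := htrans s hsab (hflt s ⟨le_of_lt hs.1, le_of_lt hs.2⟩)
        linarith
    have hgy : g y < g x := hganti ⟨le_rfl, hxy⟩ ⟨hxy, le_rfl⟩ h
    have h1 : |f x| ≤ r := hx.2
    have h2 : |f y| ≤ r := hy.2
    rw [abs_le] at h1 h2
    simp only [hg] at hgy
    nlinarith
  rcases Set.eq_empty_or_nonempty S with hS | hS
  · rw [hS]; simp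
  · have hSbdd : BddBelow S := ⟨a, fun s hs => hs.1.1⟩
    have hSclosed : IsClosed S := by
      have : S = Set.Icc a b ∩ f ⁻¹' {z : ℝ | |z| ≤ r} := by
        ext s; simp [hSdef, Set.mem_setOf_eq]
      rw [this]
      exact ContinuousOn.preimage_isClosed_of_isClosed hcont isClosed_Icc
        (isClosed_le (by continuity) continuous_const)
    set c := sInf S with hc
    have hcS : c ∈ S := hSclosed.csInf_mem hS hSbdd
    have hSsub : S ⊆ Set.Icc c (c + 2 * r / δ) := by
      intro z hz
      refine ⟨csInf_le hSbdd hz, ?_⟩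
      have h := key c hcS z hz (csInf_le hSbdd hz)
      have h2 : z - c ≤ 2 * r / δ := by rw [le_div_iff₀ hδ]; nlinarith
      linarith
    calc MeasureTheory.volume S ≤ MeasureTheory.volume (Set.Icc c (c + 2 * r / δ)) :=
          MeasureTheory.measure_mono hSsub
      _ = ENNReal.ofReal (c + 2 * r / δ - c) := Real.volume_Icc
      _ = ENNReal.ofReal (2 * r / δ) := by ring_nf
end
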